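/- Let K be a field, d ∈ K a non-square, L = K(√d), and g ≥ 2. Let A, C ∈ M_{(g−1)×1}(K) be column vectors and U ∈ M_{g−1}(K) satisfy C·Aᵗ − A·Cᵗ = U − Uᵗ. Define the g×g matrices over L: μ₁ = [[−1, −Cᵗ√d],[A + C√d, −I − U√d]] and μ₂ = [[√d, −Aᵗ√d],[A + C√d, −I − U√d]]. If det(μ₁) = 0 and det(μ₂) = 0, then the (g−1)×g matrix (A + C√d | −I − U√d) has rank at most g − 2. -/

import Mathlib

open Matrix

private lemma rank_le_of_left_kernel {L : Type*} [Field L] {n : ℕ} {J : Type*} [Fintype J]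
    (N : Matrix (Fin n) J L) {w : Fin n → L} (hw : w ≠ 0) (h : w ᵥ* N = 0) :
    N.rank ≤ n - 1 := by
  have hT : Nᵀ *ᵥ w = 0 := by rwa [mulVec_transpose]
  have hker : w ∈ LinearMap.ker Nᵀ.mulVecLin := by
    simpa [LinearMap.mem_ker, Matrix.mulVecLin_apply, mulVec_transpose] using h
  have h1 : 1 ≤ Module.finrank L (LinearMap.ker Nᵀ.mulVecLin) := by
    rw [Submodule.one_le_finrank_iff]
    intro hbot
    rw [hbot, Submodule.mem_bot] at hker
    exact hw hker
  have h2 := LinearMap.finrank_range_add_finrank_ker (Nᵀ.mulVecLin)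
  rw [Module.finrank_fin_fun] at h2
  have h3 : N.rank = Module.finrank L (LinearMap.range Nᵀ.mulVecLin) := by
    rw [← rank_transpose]; rfl
  omega

private lemma extract {L : Type*} [Field L] {n : ℕ}
    (P : Matrix (Fin 1) (Fin 1) L) (Q : Matrix (Fin 1) (Fin n) L)
    (B : Matrix (Fin n) (Fin 1) L) (M : Matrix (Fin n) (Fin n) L)
    (h : (fromBlocks P Q B M).det = 0) :
    (∃ w : Fin n → L, w ≠ 0 ∧ w ᵥ* fromCols B M = 0) ∨
      (∃ x : Fin n → L, x ᵥ* B = P 0 ∧ x ᵥ* M = Q 0) := by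
  obtain ⟨v, hv0, hveq⟩ := Matrix.exists_vecMul_eq_zero_iff.mpr h
  rw [vecMul_fromBlocks] at hveq
  have hl : (v ∘ Sum.inl) ᵥ* P + (v ∘ Sum.inr) ᵥ* B = 0 :=
    funext fun j => congrFun hveq (Sum.inl j)
  have hr : (v ∘ Sum.inl) ᵥ* Q + (v ∘ Sum.inr) ᵥ* M = 0 :=
    funext fun j => congrFun hveq (Sum.inr j)
  have hP : (v ∘ Sum.inl) ᵥ* P = v (Sum.inl 0) • P 0 := by
    funext j; simp [vecMul, dotProduct, Fin.sum_univ_one]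
  have hQ : (v ∘ Sum.inl) ᵥ* Q = v (Sum.inl 0) • Q 0 := by
    funext j; simp [vecMul, dotProduct, Fin.sum_univ_one]
  by_cases hlam : v (Sum.inl 0) = 0
  · left
    refine ⟨v ∘ Sum.inr, ?_, ?_⟩
    · intro hz
      apply hv0
      funext i
      rcases i with i | i
      · have : i = 0 := Subsingleton.elim _ _
        rw [this]; exact hlam
      · exact congrFun hz i
    · rw [vecMul_fromCols]
      have h1 : (v ∘ Sum.inr) ᵥ* B = 0 := by
        have := hl; rw [hP, hlam, zero_smul, zero_add] at this; exact this
      have h2 : (v ∘ Sum.inr) ᵥ* M = 0 := by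
        have := hr; rw [hQ, hlam, zero_smul, zero_add] at this; exact this
      rw [h1, h2]; ext (j | j) <;> simp
  · right
    refine ⟨(-(v (Sum.inl 0))⁻¹) • (v ∘ Sum.inr), ?_, ?_⟩
    · rw [smul_vecMul]
      have h1 : (v ∘ Sum.inr) ᵥ* B = -(v (Sum.inl 0) • P 0) := by
        rw [← hP]; linear_combination (norm := module) hl
      rw [h1, smul_neg, smul_smul]
      field_simp
      simp
    · rw [smul_vecMul]
      have h2 : (v ∘ Sum.inr) ᵥ* M = -(v (Sum.inl 0) • Q 0) := by
        rw [← hQ]; linear_combination (norm := module) hr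
      rw [h2, smul_neg, smul_smul]
      field_simp
      simp


/-- Lemma 4.1.12 (Zelevinskij): with `g = n + 1 ≥ 2`, columns `A, C`, and `U`
satisfying `CAᵗ − ACᵗ = U − Uᵗ`, if both `det μ₁ = 0` and `det μ₂ = 0` then the
`(g−1)×g` matrix `(A + C√d | −I − U√d)` has rank at most `g − 2 = n − 1`. -/
theorem stmt_11 {K L : Type*} [Field K] [Field L] [Algebra K L]
    (d : K) (hd : ¬IsSquare d)
    (rt : L) (hrt : rt ^ 2 = algebraMap K L d)
    {n : ℕ} (hn : 1 ≤ n)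
    (A C : Matrix (Fin n) (Fin 1) K) (U : Matrix (Fin n) (Fin n) K)
    (hsymp : C * A.transpose - A * C.transpose = U - U.transpose)
    (h₁ : (Matrix.fromBlocks
        (-1 : Matrix (Fin 1) (Fin 1) L)
        (-(rt • (C.transpose.map (algebraMap K L))))
        (A.map (algebraMap K L) + rt • C.map (algebraMap K L))
        (-1 - rt • U.map (algebraMap K L))).det = 0)
    (h₂ : (Matrix.fromBlocks
        (rt • (1 : Matrix (Fin 1) (Fin 1) L))
        (-(rt • (A.transpose.map (algebraMap K L))))
        (A.map (algebraMap K L) + rt • C.map (algebraMap K L))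
        (-1 - rt • U.map (algebraMap K L))).det = 0) :
    (Matrix.fromCols
        (A.map (algebraMap K L) + rt • C.map (algebraMap K L))
        (-1 - rt • U.map (algebraMap K L))).rank ≤ n - 1 := by
  set f := algebraMap K L with hf
  have hrt0 : rt ≠ 0 := by
    intro h0
    apply hd
    have hfd : f d = 0 := by rw [← hrt, h0]; ring
    have hd0 : d = 0 := (algebraMap K L).injective (by simpa using hfd)
    exact ⟨0, by rw [hd0]; ring⟩
  rcases extract _ _ _ _ h₁ with ⟨w, hw0, hwN⟩ | ⟨x, hxB, hxM⟩
  · exact rank_le_of_left_kernel _ hw0 hwN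
  rcases extract _ _ _ _ h₂ with ⟨w, hw0, hwN⟩ | ⟨y, hyB, hyM⟩
  · exact rank_le_of_left_kernel _ hw0 hwN
  exfalso
  -- entrywise symplectic relation
  have key : ∀ i j, f (U i j) - f (U j i) = f (C i 0) * f (A j 0) - f (A i 0) * f (C j 0) := by
    intro i j
    have h0 : (C * A.transpose - A * C.transpose) i j = (U - U.transpose) i j := by
      rw [hsymp]
    simp only [Matrix.sub_apply, Matrix.mul_apply, Matrix.transpose_apply,
      Fin.sum_univ_one] at h0
    have h1 : f (C i 0 * A j 0 - A i 0 * C j 0) = f (U i j - U j i) := by rw [h0]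
    rw [map_sub, map_sub, _root_.map_mul, _root_.map_mul] at h1
    linear_combination -h1
  -- scalar equations
  have E1 : ∑ i, x i * (f (A i 0) + rt * f (C i 0)) = -1 := by
    have h0 := congrFun hxB 0
    simpa [Matrix.vecMul, dotProduct, Matrix.add_apply, Matrix.smul_apply,
      Matrix.map_apply, smul_eq_mul] using h0
  have E3 : ∑ i, y i * (f (A i 0) + rt * f (C i 0)) = rt := by
    have h0 := congrFun hyB 0
    simpa [Matrix.vecMul, dotProduct, Matrix.add_apply, Matrix.smul_apply,
      Matrix.map_apply, smul_eq_mul] using h0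
  have hX : ∀ j, x j = rt * f (C j 0) - rt * ∑ i, x i * f (U i j) := by
    intro j
    have h0 := congrFun hxM j
    rw [vecMul_sub, vecMul_neg, vecMul_one] at h0
    simp only [Pi.sub_apply, Pi.neg_apply, Matrix.neg_apply, Matrix.smul_apply,
      Matrix.map_apply, Matrix.transpose_apply, smul_eq_mul] at h0
    have h1 : (x ᵥ* (rt • U.map ⇑f)) j = rt * ∑ i, x i * f (U i j) := by
      rw [show (x ᵥ* (rt • U.map ⇑f)) j = ∑ i, x i * (rt * f (U i j)) by
        simp [Matrix.vecMul, dotProduct, Matrix.smul_apply, Matrix.map_apply,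
          smul_eq_mul]]
      rw [Finset.mul_sum]
      exact Finset.sum_congr rfl fun i _ => by ring
    rw [h1] at h0
    linear_combination -h0
  have hY : ∀ j, y j = rt * f (A j 0) - rt * ∑ i, y i * f (U i j) := by
    intro j
    have h0 := congrFun hyM j
    rw [vecMul_sub, vecMul_neg, vecMul_one] at h0
    simp only [Pi.sub_apply, Pi.neg_apply, Matrix.neg_apply, Matrix.smul_apply,
      Matrix.map_apply, Matrix.transpose_apply, smul_eq_mul] at h0
    have h1 : (y ᵥ* (rt • U.map ⇑f)) j = rt * ∑ i, y i * f (U i j) := by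
      rw [show (y ᵥ* (rt • U.map ⇑f)) j = ∑ i, y i * (rt * f (U i j)) by
        simp [Matrix.vecMul, dotProduct, Matrix.smul_apply, Matrix.map_apply,
          smul_eq_mul]]
      rw [Finset.mul_sum]
      exact Finset.sum_congr rfl fun i _ => by ring
    rw [h1] at h0
    linear_combination -h0
  -- abbreviations
  set s := ∑ i, x i * f (A i 0) with hs
  set t := ∑ i, x i * f (C i 0) with ht
  set uu := ∑ i, y i * f (A i 0) with huu
  set vv := ∑ i, y i * f (C i 0) with hvv
  set W1 := ∑ j, (∑ i, x i * f (U i j)) * y j with hW1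
  set W2 := ∑ j, (∑ i, y i * f (U i j)) * x j with hW2
  have expand1 : ∑ i, x i * (f (A i 0) + rt * f (C i 0)) = s + rt * t := by
    rw [hs, ht, Finset.mul_sum, ← Finset.sum_add_distrib]
    exact Finset.sum_congr rfl fun i _ => by ring
  have expand3 : ∑ i, y i * (f (A i 0) + rt * f (C i 0)) = uu + rt * vv := by
    rw [huu, hvv, Finset.mul_sum, ← Finset.sum_add_distrib]
    exact Finset.sum_congr rfl fun i _ => by ring
  have e1 : s + rt * t = -1 := by rw [← expand1]; exact E1
  have e3 : uu + rt * vv = rt := by rw [← expand3]; exact E3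
  have h5 : ∑ j, x j * y j = rt * vv - rt * W1 := by
    rw [hvv, hW1, Finset.mul_sum, Finset.mul_sum, ← Finset.sum_sub_distrib]
    refine Finset.sum_congr rfl fun j _ => ?_
    rw [hX j]; ring
  have h6 : ∑ j, y j * x j = rt * s - rt * W2 := by
    rw [hs, hW2, Finset.mul_sum, Finset.mul_sum, ← Finset.sum_sub_distrib]
    refine Finset.sum_congr rfl fun j _ => ?_
    rw [hY j]; ring
  have h7 : ∑ j, x j * y j = ∑ j, y j * x j :=
    Finset.sum_congr rfl fun j _ => mul_comm _ _
  have h8 : vv - W1 = s - W2 := by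
    have h9 : rt * (vv - W1) = rt * (s - W2) := by
      rw [mul_sub, mul_sub, ← h5, ← h6]; exact h7
    exact mul_left_cancel₀ hrt0 h9
  have h10 : W1 - W2 = t * uu - s * vv := by
    have hW1' : W1 = ∑ j, ∑ i, x i * f (U i j) * y j := by
      rw [hW1]; exact Finset.sum_congr rfl fun j _ => Finset.sum_mul _ _ _
    have hW2' : W2 = ∑ j, ∑ i, y j * f (U j i) * x i := by
      rw [hW2]
      rw [show (∑ j, (∑ i, y i * f (U i j)) * x j) = ∑ j, ∑ i, y i * f (U i j) * x j from
        Finset.sum_congr rfl fun j _ => Finset.sum_mul _ _ _]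
      exact Finset.sum_comm
    have htu : t * uu = ∑ j, ∑ i, (x i * f (C i 0)) * (y j * f (A j 0)) := by
      rw [ht, huu, Finset.sum_mul_sum]; exact Finset.sum_comm
    have hsv : s * vv = ∑ j, ∑ i, (x i * f (A i 0)) * (y j * f (C j 0)) := by
      rw [hs, hvv, Finset.sum_mul_sum]; exact Finset.sum_comm
    rw [hW1', hW2', htu, hsv, ← Finset.sum_sub_distrib, ← Finset.sum_sub_distrib]
    refine Finset.sum_congr rfl fun j _ => ?_
    rw [← Finset.sum_sub_distrib, ← Finset.sum_sub_distrib]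
    refine Finset.sum_congr rfl fun i _ => ?_
    linear_combination (x i * y j) * key i j
  have hstar : vv - s = t * uu - s * vv := by linear_combination h8 + h10
  have hcontra : (1 : L) = 0 := by linear_combination hstar - (vv - 1) * e1 + t * e3
  exact one_ne_zero hcontra
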